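/- Let N ≥ 3, let A ∈ ℂ^{N×N} be Hermitian positive definite with eigenvalues λ_0 ≥ λ_1 ≥ ⋯ ≥ λ_{N−1} > 0 (descending, with multiplicity), let b ∈ ℂ^N be a unit vector, and let ξ > 0. Then the largest singular value of Θ = A − ξ b bᴴ is at least λ_1 and the smallest singular value of Θ is at most λ_{N−2}; in particular, if Θ is invertible, its condition number satisfies κ(Θ) ≥ λ_1/λ_{N−2}. -/

import Mathlib

open Matrix
open scoped ComplexOrder

noncomputable section

/-- `l` lists the eigenvalues of the Hermitian matrix `A` (with Hermitian proof `hA`)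
in descending order with multiplicity. -/
def IsDescEigListing {N : ℕ} {A : Matrix (Fin N) (Fin N) ℂ}
    (hA : A.IsHermitian) (l : Fin N → ℝ) : Prop :=
  Antitone l ∧ ∃ e : Equiv.Perm (Fin N), ∀ i, l i = hA.eigenvalues (e i)

namespace SR1Aux

variable {N : ℕ}

local notation "⟪" x ", " y "⟫" => @inner ℂ _ _ x y

/-- Reinterpret a plain vector as an element of Euclidean space. -/
def toE {N : ℕ} (v : Fin N → ℂ) : EuclideanSpace ℂ (Fin N) := (WithLp.equiv 2 _).symm v

lemma norm_sq_repr (B : OrthonormalBasis (Fin N) ℂ (EuclideanSpace ℂ (Fin N)))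
    (y : EuclideanSpace ℂ (Fin N)) : ‖y‖ ^ 2 = ∑ i, ‖B.repr y i‖ ^ 2 := by
  rw [← B.repr.norm_map y, EuclideanSpace.norm_eq, Real.sq_sqrt (by positivity)]

lemma repr_mulVec (A : Matrix (Fin N) (Fin N) ℂ) (hA : A.IsHermitian)
    (x : EuclideanSpace ℂ (Fin N)) (i : Fin N) :
    hA.eigenvectorBasis.repr (toE (A *ᵥ x)) i
      = (hA.eigenvalues i : ℂ) * hA.eigenvectorBasis.repr x i := by
  rw [OrthonormalBasis.repr_apply_apply, OrthonormalBasis.repr_apply_apply,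
    EuclideanSpace.inner_eq_star_dotProduct, EuclideanSpace.inner_eq_star_dotProduct]
  rw [dotProduct_comm, dotProduct_comm x.ofLp]
  show star (hA.eigenvectorBasis i).ofLp ⬝ᵥ (A *ᵥ x.ofLp)
      = _ * (star (hA.eigenvectorBasis i).ofLp ⬝ᵥ x.ofLp)
  rw [Matrix.dotProduct_mulVec]
  have h1 : star (⇑(hA.eigenvectorBasis i)) ᵥ* A
      = star (A *ᵥ ⇑(hA.eigenvectorBasis i)) := by
    rw [Matrix.star_mulVec, hA.eq]
  rw [h1, hA.mulVec_eigenvectorBasis]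
  simp [dotProduct, Finset.mul_sum, Complex.real_smul, mul_assoc, mul_comm,
    mul_left_comm]

lemma norm_mulVec_sq (A : Matrix (Fin N) (Fin N) ℂ) (hA : A.IsHermitian)
    (x : EuclideanSpace ℂ (Fin N)) :
    ‖toE (A *ᵥ x)‖ ^ 2
      = ∑ i, |hA.eigenvalues i| ^ 2 * ‖hA.eigenvectorBasis.repr x i‖ ^ 2 := by
  rw [norm_sq_repr hA.eigenvectorBasis (toE (A *ᵥ x))]
  refine Finset.sum_congr rfl fun i _ => ?_
  rw [repr_mulVec, norm_mul, mul_pow, Complex.norm_real, Real.norm_eq_abs]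

lemma norm_mulVec_sq_bounds (hN : 0 < N) (Θ : Matrix (Fin N) (Fin N) ℂ)
    (hΘ : Θ.IsHermitian) (x : EuclideanSpace ℂ (Fin N)) :
    (⨅ i, |hΘ.eigenvalues i|) ^ 2 * ‖x‖ ^ 2
        ≤ ‖toE (Θ *ᵥ x)‖ ^ 2 ∧
    ‖toE (Θ *ᵥ x)‖ ^ 2
        ≤ (⨆ i, |hΘ.eigenvalues i|) ^ 2 * ‖x‖ ^ 2 := by
  haveI : Nonempty (Fin N) := ⟨⟨0, hN⟩⟩
  have hm0 : 0 ≤ ⨅ i, |hΘ.eigenvalues i| := le_ciInf fun i => abs_nonneg _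
  have hmle : ∀ i, (⨅ j, |hΘ.eigenvalues j|) ≤ |hΘ.eigenvalues i| := fun i =>
    ciInf_le (Set.Finite.bddBelow (Set.finite_range _)) i
  have hMle : ∀ i, |hΘ.eigenvalues i| ≤ ⨆ j, |hΘ.eigenvalues j| := fun i =>
    le_ciSup (f := fun j => |hΘ.eigenvalues j|) (Set.Finite.bddAbove (Set.finite_range _)) i
  rw [norm_mulVec_sq Θ hΘ x, norm_sq_repr hΘ.eigenvectorBasis x]
  constructor
  · rw [Finset.mul_sum]
    refine Finset.sum_le_sum fun i _ => ?_
    exact mul_le_mul_of_nonneg_right (pow_le_pow_left₀ hm0 (hmle i) 2) (by positivity)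
  · rw [Finset.mul_sum]
    refine Finset.sum_le_sum fun i _ => ?_
    exact mul_le_mul_of_nonneg_right (pow_le_pow_left₀ (abs_nonneg _) (hMle i) 2)
      (by positivity)

lemma exists_test_aux (B : OrthonormalBasis (Fin N) ℂ (EuclideanSpace ℂ (Fin N)))
    (b : Fin N → ℂ) (i1 i2 : Fin N) (h12 : i1 ≠ i2) (c1 c2 : ℂ)
    (hc : ¬(c1 = 0 ∧ c2 = 0))
    (horth : (starRingEnd ℂ) (B.repr ((WithLp.equiv 2 _).symm b) i1) * c1
           + (starRingEnd ℂ) (B.repr ((WithLp.equiv 2 _).symm b) i2) * c2 = 0) :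
    ∃ x : EuclideanSpace ℂ (Fin N), x ≠ 0 ∧ star b ⬝ᵥ (WithLp.equiv 2 _ x) = 0 ∧
      ∀ i, i ≠ i1 → i ≠ i2 → B.repr x i = 0 := by
  set d : EuclideanSpace ℂ (Fin N) :=
    EuclideanSpace.single i1 c1 + EuclideanSpace.single i2 c2 with hd
  refine ⟨B.repr.symm d, ?_, ?_, ?_⟩
  · intro h
    have hd0 : d = 0 := by
      have := congrArg B.repr h
      simpa using this
    rcases not_and_or.mp hc with h1 | h1
    · apply h1
      have := congrFun (congrArg (fun v : EuclideanSpace ℂ (Fin N) => (v : Fin N → ℂ)) hd0) i1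
      simpa [hd, EuclideanSpace.single_apply, h12, Ne.symm h12] using this
    · apply h1
      have := congrFun (congrArg (fun v : EuclideanSpace ℂ (Fin N) => (v : Fin N → ℂ)) hd0) i2
      simpa [hd, EuclideanSpace.single_apply, h12, Ne.symm h12] using this
  · have hin : star b ⬝ᵥ (WithLp.equiv 2 _ (B.repr.symm d))
        = ⟪(WithLp.equiv 2 (Fin N → ℂ)).symm b, B.repr.symm d⟫ := by
      rw [EuclideanSpace.inner_eq_star_dotProduct, dotProduct_comm]
      simp
    rw [hin, ← B.repr.inner_map_map ((WithLp.equiv 2 (Fin N → ℂ)).symm b) (B.repr.symm d),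
      LinearIsometryEquiv.apply_symm_apply, hd, inner_add_right,
      EuclideanSpace.inner_single_right, EuclideanSpace.inner_single_right]
    linear_combination horth
  · intro i hi1 hi2
    rw [LinearIsometryEquiv.apply_symm_apply]
    simp [hd, EuclideanSpace.single_apply, hi1, hi2]

lemma exists_test (B : OrthonormalBasis (Fin N) ℂ (EuclideanSpace ℂ (Fin N)))
    (b : Fin N → ℂ) (i1 i2 : Fin N) (h12 : i1 ≠ i2) :
    ∃ x : EuclideanSpace ℂ (Fin N), x ≠ 0 ∧ star b ⬝ᵥ (WithLp.equiv 2 _ x) = 0 ∧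
      ∀ i, i ≠ i1 → i ≠ i2 → B.repr x i = 0 := by
  by_cases h : B.repr ((WithLp.equiv 2 _).symm b) i1 = 0 ∧
      B.repr ((WithLp.equiv 2 _).symm b) i2 = 0
  · exact exists_test_aux B b i1 i2 h12 1 0 (by simp) (by rw [h.1, h.2]; simp)
  · refine exists_test_aux B b i1 i2 h12
      ((starRingEnd ℂ) (B.repr ((WithLp.equiv 2 _).symm b) i2))
      (-(starRingEnd ℂ) (B.repr ((WithLp.equiv 2 _).symm b) i1)) ?_ (by ring)
    intro hc
    apply h
    constructor
    · have := hc.2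
      simpa using this
    · have := hc.1
      simpa using this

end SR1Aux

open SR1Aux

/-- For `ξ > 0`, the largest singular value of `Θ = A - ξ b bᴴ` is at least `λ₁` and its
smallest singular value is at most `λ_{N-2}`; hence if `Θ` is invertible its condition
number satisfies `κ(Θ) ≥ λ₁/λ_{N-2}`. -/
theorem sr1r_cond_lower_bound {N : ℕ} (hN : 3 ≤ N)
    (A : Matrix (Fin N) (Fin N) ℂ) (hA : A.PosDef)
    (lam : Fin N → ℝ) (hlam : IsDescEigListing hA.isHermitian lam)
    (hlampos : ∀ i, 0 < lam i)
    (b : Fin N → ℂ) (hb : star b ⬝ᵥ b = 1)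
    (ξ : ℝ) (hξ : 0 < ξ)
    (Θ : Matrix (Fin N) (Fin N) ℂ)
    (hΘdef : Θ = A - (ξ : ℂ) • vecMulVec b (star b))
    (hΘ : Θ.IsHermitian) :
    lam ⟨1, by omega⟩ ≤ (⨆ i, |hΘ.eigenvalues i|) ∧
    (⨅ i, |hΘ.eigenvalues i|) ≤ lam ⟨N - 2, by omega⟩ ∧
    (IsUnit Θ →
      lam ⟨1, by omega⟩ / lam ⟨N - 2, by omega⟩ ≤
        (⨆ i, |hΘ.eigenvalues i|) / (⨅ i, |hΘ.eigenvalues i|)) := by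
  obtain ⟨hanti, e, he⟩ := hlam
  haveI : Nonempty (Fin N) := ⟨⟨0, by omega⟩⟩
  have hherm := hA.isHermitian
  have hN0 : 0 < N := by omega
  -- Θ acts like A on vectors orthogonal to b
  have hΘmul : ∀ x : Fin N → ℂ, star b ⬝ᵥ x = 0 → Θ *ᵥ x = A *ᵥ x := by
    intro x hx
    rw [hΘdef, Matrix.sub_mulVec, Matrix.smul_mulVec]
    have hv : vecMulVec b (star b) *ᵥ x = (star b ⬝ᵥ x) • b := by
      funext j
      simp [vecMulVec_apply, mulVec, dotProduct, Finset.mul_sum, mul_assoc, mul_comm,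
        mul_left_comm]
    rw [hv, hx, zero_smul, smul_zero, sub_zero]
  -- the key sandwich lemma
  have key : ∀ i1 i2 : Fin N, i1 ≠ i2 →
      (∀ r : ℝ, 0 ≤ r → r ≤ |hherm.eigenvalues i1| → r ≤ |hherm.eigenvalues i2| →
        r ≤ ⨆ i, |hΘ.eigenvalues i|) ∧
      (∀ s : ℝ, |hherm.eigenvalues i1| ≤ s → |hherm.eigenvalues i2| ≤ s →
        (⨅ i, |hΘ.eigenvalues i|) ≤ s) := by
    intro i1 i2 h12
    obtain ⟨x, hx0, hxb, hxsupp⟩ := exists_test hherm.eigenvectorBasis b i1 i2 h12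
    have hx2 : 0 < ‖x‖ ^ 2 := by
      have : 0 < ‖x‖ := norm_pos_iff.mpr hx0
      positivity
    have hΘA : toE (Θ *ᵥ x) = toE (A *ᵥ x) := congrArg toE (hΘmul _ hxb)
    have hAx : ‖toE (A *ᵥ x)‖ ^ 2
        = ∑ i, |hherm.eigenvalues i| ^ 2 * ‖hherm.eigenvectorBasis.repr x i‖ ^ 2 :=
      norm_mulVec_sq A hherm x
    have hxr : ‖x‖ ^ 2 = ∑ i, ‖hherm.eigenvectorBasis.repr x i‖ ^ 2 :=
      norm_sq_repr hherm.eigenvectorBasis x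
    have hbnds := norm_mulVec_sq_bounds hN0 Θ hΘ x
    have hM0 : 0 ≤ ⨆ i, |hΘ.eigenvalues i| :=
      le_trans (abs_nonneg (hΘ.eigenvalues ⟨0, hN0⟩))
        (le_ciSup (f := fun i => |hΘ.eigenvalues i|)
          (Set.Finite.bddAbove (Set.finite_range _)) ⟨0, hN0⟩)
    have hm0 : 0 ≤ ⨅ i, |hΘ.eigenvalues i| := le_ciInf fun i => abs_nonneg _
    constructor
    · intro r hr0 hr1 hr2
      have hlow : r ^ 2 * ‖x‖ ^ 2 ≤ ‖toE (A *ᵥ x)‖ ^ 2 := by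
        rw [hAx, hxr, Finset.mul_sum]
        refine Finset.sum_le_sum fun i _ => ?_
        by_cases hi : i = i1 ∨ i = i2
        · rcases hi with hi | hi <;> subst hi
          · exact mul_le_mul_of_nonneg_right (pow_le_pow_left₀ hr0 hr1 2) (by positivity)
          · exact mul_le_mul_of_nonneg_right (pow_le_pow_left₀ hr0 hr2 2) (by positivity)
        · push_neg at hi
          rw [hxsupp i hi.1 hi.2]
          simp
      have : r ^ 2 * ‖x‖ ^ 2 ≤ (⨆ i, |hΘ.eigenvalues i|) ^ 2 * ‖x‖ ^ 2 := by
        refine le_trans hlow ?_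
        rw [← hΘA]
        exact hbnds.2
      have hr2M : r ^ 2 ≤ (⨆ i, |hΘ.eigenvalues i|) ^ 2 :=
        le_of_mul_le_mul_right (by linarith [this]) hx2
      exact (pow_le_pow_iff_left₀ hr0 hM0 two_ne_zero).mp hr2M
    · intro s hs1 hs2
      have hs0 : 0 ≤ s := le_trans (abs_nonneg _) hs1
      have hhigh : ‖toE (A *ᵥ x)‖ ^ 2 ≤ s ^ 2 * ‖x‖ ^ 2 := by
        rw [hAx, hxr, Finset.mul_sum]
        refine Finset.sum_le_sum fun i _ => ?_
        by_cases hi : i = i1 ∨ i = i2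
        · rcases hi with hi | hi <;> subst hi
          · exact mul_le_mul_of_nonneg_right (pow_le_pow_left₀ (abs_nonneg _) hs1 2)
              (by positivity)
          · exact mul_le_mul_of_nonneg_right (pow_le_pow_left₀ (abs_nonneg _) hs2 2)
              (by positivity)
        · push_neg at hi
          rw [hxsupp i hi.1 hi.2]
          simp
      have : (⨅ i, |hΘ.eigenvalues i|) ^ 2 * ‖x‖ ^ 2 ≤ s ^ 2 * ‖x‖ ^ 2 := by
        refine le_trans ?_ hhigh
        rw [← hΘA]
        exact hbnds.1
      have hm2s : (⨅ i, |hΘ.eigenvalues i|) ^ 2 ≤ s ^ 2 :=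
        le_of_mul_le_mul_right (by linarith [this]) hx2
      exact (pow_le_pow_iff_left₀ hm0 hs0 two_ne_zero).mp hm2s
  -- apply with the top two eigenvalues
  have h12 : e ⟨0, by omega⟩ ≠ e ⟨1, by omega⟩ := by
    intro h
    have := e.injective h
    simp [Fin.ext_iff] at this
  have part1 : lam ⟨1, by omega⟩ ≤ ⨆ i, |hΘ.eigenvalues i| := by
    refine (key _ _ h12).1 (lam ⟨1, by omega⟩) (hlampos _).le ?_ ?_
    · rw [← he ⟨0, by omega⟩, abs_of_pos (hlampos _)]
      exact hanti (by simp [Fin.le_def])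
    · rw [← he ⟨1, by omega⟩, abs_of_pos (hlampos _)]
  have h34 : e ⟨N - 2, by omega⟩ ≠ e ⟨N - 1, by omega⟩ := by
    intro h
    have := e.injective h
    simp [Fin.ext_iff] at this
    omega
  have part2 : (⨅ i, |hΘ.eigenvalues i|) ≤ lam ⟨N - 2, by omega⟩ := by
    refine (key _ _ h34).2 (lam ⟨N - 2, by omega⟩) ?_ ?_
    · rw [← he ⟨N - 2, by omega⟩, abs_of_pos (hlampos _)]
    · rw [← he ⟨N - 1, by omega⟩, abs_of_pos (hlampos _)]
      exact hanti (by simp [Fin.le_def]; omega)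
  refine ⟨part1, part2, ?_⟩
  intro hu
  have hdet : Θ.det ≠ 0 := by
    have := (Matrix.isUnit_iff_isUnit_det Θ).mp hu
    exact IsUnit.ne_zero this
  have hμ : ∀ i, hΘ.eigenvalues i ≠ 0 := by
    intro i hi
    apply hdet
    rw [hΘ.det_eq_prod_eigenvalues]
    refine Finset.prod_eq_zero (Finset.mem_univ i) ?_
    rw [hi]
    exact Complex.ofReal_zero
  have hmpos : 0 < ⨅ i, |hΘ.eigenvalues i| := by
    obtain ⟨j, hj⟩ := Finite.exists_min fun i => |hΘ.eigenvalues i|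
    have : 0 < |hΘ.eigenvalues j| := abs_pos.mpr (hμ j)
    exact lt_of_lt_of_le this (le_ciInf hj)
  exact div_le_div₀ (le_trans (hlampos _).le part1) part1 hmpos part2

end
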